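/- If every non-terminal vertex of a finite directed graph G has out-degree at least 1, and for every vertex v reachable from a start vertex s and every process index i there exists a path from v to a vertex where process i can act, then there exists a subgraph (SEG) containing s in which every cycle passes through a distinguished ('all-white') vertex. -/

import Mathlib

/-- `Steps E n a b`: there is an `E`-path of length `n` from `a` to `b`. -/
private def Steps {V : Type*} (E : V → V → Prop) : ℕ → V → V → Prop
  | 0 => Eq
  | n+1 => fun a b => ∃ c, E a c ∧ Steps E n c b

private lemma exists_steps_of_reflTransGen {V : Type*} {E : V → V → Prop} {a b : V}
    (h : Relation.ReflTransGen E a b) : ∃ n, Steps E n a b := by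
  induction h using Relation.ReflTransGen.head_induction_on with
  | refl => exact ⟨0, rfl⟩
  | head hab _ ih => obtain ⟨n, hn⟩ := ih; exact ⟨n + 1, _, hab, hn⟩

/-- Existence of a valid SEG (abstract version of Theorem 4): in a finite
directed graph in which every non-terminal vertex has a successor and from
every vertex reachable from `s` some all-white vertex is reachable, there is
a subgraph containing `s`, still total on reachable non-terminal vertices,
all of whose cycles pass through a white vertex. -/
theorem valid_seg_exists {V : Type*} [Fintype V]
    (E : V → V → Prop) (white terminal : V → Prop) (s : V)
    (hdeg : ∀ v, ¬ terminal v → ∃ w, E v w)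
    (hfair : ∀ v, Relation.ReflTransGen E s v →
      ∃ w, Relation.ReflTransGen E v w ∧ white w) :
    ∃ E' : V → V → Prop,
      (∀ a b, E' a b → E a b) ∧
      (∀ v, Relation.ReflTransGen E' s v → ¬ terminal v → ∃ w, E' v w) ∧
      (∀ (v : V) (l : List V), List.Chain E' v l →
        E' ((v :: l).getLast (List.cons_ne_nil v l)) v →
        white v ∨ ∃ w ∈ l, white w) := by
  classical
  set R : V → Prop := fun v => Relation.ReflTransGen E s v with hRdef
  set P : V → ℕ → Prop := fun v n => ∃ w, Steps E n v w ∧ white w with hPdef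
  have hex : ∀ v, R v → ∃ n, P v n := by
    intro v hv
    obtain ⟨w, hw, hwhite⟩ := hfair v hv
    obtain ⟨n, hn⟩ := exists_steps_of_reflTransGen hw
    exact ⟨n, w, hn, hwhite⟩
  set rank : V → ℕ := fun v => if h : ∃ n, P v n then Nat.find h else 0 with hrankdef
  have rank_le : ∀ v n, P v n → rank v ≤ n := by
    intro v n h
    have hx : ∃ m, P v m := ⟨n, h⟩
    simp only [hrankdef]
    rw [dif_pos hx]
    exact Nat.find_le h
  have rank_spec : ∀ v, (∃ n, P v n) → P v (rank v) := by
    intro v h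
    simp only [hrankdef]
    rw [dif_pos h]
    exact Nat.find_spec h
  have step : ∀ v, R v → ¬ terminal v →
      ∃ c, E v c ∧ (¬ white v → rank c < rank v) := by
    intro v hv hterm
    by_cases hw : white v
    · obtain ⟨c, hc⟩ := hdeg v hterm
      exact ⟨c, hc, fun h => absurd hw h⟩
    · have h := hex v hv
      obtain ⟨w, hsw, hww⟩ := rank_spec v h
      cases hn : rank v with
      | zero =>
        rw [hn] at hsw
        cases hsw
        exact absurd hww hw
      | succ m =>
        rw [hn] at hsw
        obtain ⟨c, hvc, hcw⟩ := hsw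
        refine ⟨c, hvc, fun _ => ?_⟩
        have : rank c ≤ m := rank_le c m ⟨w, hcw, hww⟩
        omega
  choose f hf hfr using step
  set E' : V → V → Prop :=
    fun a b => ∃ (h1 : R a) (h2 : ¬ terminal a), b = f a h1 h2 with hE'def
  have hsub : ∀ a b, E' a b → E a b := by
    rintro a b ⟨h1, h2, rfl⟩
    exact hf a h1 h2
  have edge : ∀ a b, E' a b → ¬ white a → rank b < rank a := by
    rintro a b ⟨h1, h2, rfl⟩ hw
    exact hfr a h1 h2 hw
  refine ⟨E', hsub, ?_, ?_⟩
  · intro v hv hterm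
    have hRv : R v := Relation.ReflTransGen.mono hsub _ _ hv
    exact ⟨f v hRv hterm, hRv, hterm, rfl⟩
  · intro v l hchain hback
    by_contra hcon
    push_neg at hcon
    obtain ⟨hwv, hwl⟩ := hcon
    have mono : ∀ (l : List V) (v : V), List.Chain E' v l → ¬ white v →
        (∀ w ∈ l, ¬ white w) →
        rank ((v :: l).getLast (List.cons_ne_nil v l)) ≤ rank v := by
      intro l
      induction l with
      | nil => intro v _ _ _; simp
      | cons b t ih =>
        intro v hchain hwv hwl
        rcases List.chain_cons.mp hchain with ⟨hvb, hbt⟩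
        have h1 : rank b < rank v := edge v b hvb hwv
        have h2 : rank ((b :: t).getLast (List.cons_ne_nil b t)) ≤ rank b :=
          ih b hbt (hwl b List.mem_cons_self) (fun w hw => hwl w (List.mem_cons_of_mem b hw))
        have h3 : (v :: b :: t).getLast (List.cons_ne_nil v (b :: t)) =
            (b :: t).getLast (List.cons_ne_nil b t) := by
          simp [List.getLast_cons]
        rw [h3]
        omega
    have hlast_mem : (v :: l).getLast (List.cons_ne_nil v l) ∈ v :: l :=
      List.getLast_mem _
    have hwlast : ¬ white ((v :: l).getLast (List.cons_ne_nil v l)) := by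
      rcases List.mem_cons.mp hlast_mem with h | h
      · rw [h]; exact hwv
      · exact hwl _ h
    have h1 : rank ((v :: l).getLast (List.cons_ne_nil v l)) ≤ rank v :=
      mono l v hchain hwv hwl
    have h2 : rank v < rank ((v :: l).getLast (List.cons_ne_nil v l)) :=
      edge _ v hback hwlast
    omega
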